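/- (Welsh–Powell bound) For a finite graph G with vertices v_1, ..., v_n ordered so that deg(v_1) ≥ deg(v_2) ≥ ... ≥ deg(v_n), the chromatic number satisfies χ(G) ≤ 1 + max_{1 ≤ i ≤ n} min(deg(v_i), i - 1). -/
import Mathlib

open Finset

/-- The greedy colouring of `G` in the natural order on `Fin n`. -/
def greedyCol {n : ℕ} (G : SimpleGraph (Fin n)) [DecidableRel G.Adj] : Fin n → ℕ
  | i =>
    Nat.find (p := fun c =>
      c ∉ ((Finset.univ.filter fun j : Fin n => j < i ∧ G.Adj i j).attach.image
        (fun j => greedyCol G j.1)))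
      (by
        obtain ⟨c, hc⟩ := Infinite.exists_notMem_finset
          ((Finset.univ.filter fun j : Fin n => j < i ∧ G.Adj i j).attach.image
            (fun j => greedyCol G j.1))
        exact ⟨c, hc⟩)
termination_by i => i.val
decreasing_by
  all_goals exact (Finset.mem_filter.mp j.2).2.1

lemma greedyCol_notMem {n : ℕ} (G : SimpleGraph (Fin n)) [DecidableRel G.Adj] (i : Fin n) :
    greedyCol G i ∉ ((Finset.univ.filter fun j : Fin n => j < i ∧ G.Adj i j).attach.image
      (fun j => greedyCol G j.1)) := by
  rw [greedyCol]
  exact Nat.find_spec (p := fun c =>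
    c ∉ ((Finset.univ.filter fun j : Fin n => j < i ∧ G.Adj i j).attach.image
      (fun j => greedyCol G j.1))) _

lemma greedyCol_ne {n : ℕ} (G : SimpleGraph (Fin n)) [DecidableRel G.Adj] {i j : Fin n}
    (hj : j < i) (hadj : G.Adj i j) : greedyCol G j ≠ greedyCol G i := by
  intro h
  apply greedyCol_notMem G i
  rw [← h]
  exact Finset.mem_image_of_mem _ (Finset.mem_attach _ ⟨j, by simp [hj, hadj]⟩)

lemma greedyCol_le {n : ℕ} (G : SimpleGraph (Fin n)) [DecidableRel G.Adj] (i : Fin n) :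
    greedyCol G i ≤ min (G.degree i) (i : ℕ) := by
  set S := ((Finset.univ.filter fun j : Fin n => j < i ∧ G.Adj i j).attach.image
      (fun j => greedyCol G j.1)) with hS
  have hcard : S.card ≤ min (G.degree i) (i : ℕ) := by
    have h1 : S.card ≤ (Finset.univ.filter fun j : Fin n => j < i ∧ G.Adj i j).card := by
      calc S.card ≤ _ := Finset.card_image_le
        _ = _ := Finset.card_attach
    refine le_min (h1.trans ?_) (h1.trans ?_)
    · rw [← SimpleGraph.card_neighborFinset_eq_degree]
      apply Finset.card_le_card
      intro j hj
      simp only [Finset.mem_filter] at hj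
      exact (SimpleGraph.mem_neighborFinset _ _ _).mpr hj.2.2
    · calc (Finset.univ.filter fun j : Fin n => j < i ∧ G.Adj i j).card
          ≤ (Finset.univ.filter fun j : Fin n => j < i).card := by
            apply Finset.card_le_card
            intro j hj
            simp only [Finset.mem_filter] at hj ⊢
            exact ⟨hj.1, hj.2.1⟩
        _ = (i : ℕ) := by
            rw [show (Finset.univ.filter fun j : Fin n => j < i) = Finset.Iio i by
              ext j; simp, Fin.card_Iio]
  -- some c ≤ S.card is not in S
  have : ∃ c ≤ S.card, c ∉ S := by
    by_contra h
    push_neg at h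
    have hsub : Finset.range (S.card + 1) ⊆ S := by
      intro c hc
      exact h c (Nat.lt_succ_iff.mp (Finset.mem_range.mp hc))
    have := Finset.card_le_card hsub
    simp at this
  obtain ⟨c, hc1, hc2⟩ := this
  have : greedyCol G i ≤ c := by
    rw [greedyCol]
    exact Nat.find_le hc2
  exact this.trans (hc1.trans hcard)

/-- Welsh–Powell bound: if the vertices `v_0, …, v_{n-1}` of `G` are ordered by
non-increasing degree, then `χ(G) ≤ 1 + max_i min(deg(v_i), i)`. -/
theorem welsh_powell_bound
    {n : ℕ} (G : SimpleGraph (Fin n)) [DecidableRel G.Adj]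
    (h_sorted : ∀ i j : Fin n, i ≤ j → G.degree j ≤ G.degree i) :
    G.chromaticNumber
      ≤ ((1 + Finset.univ.sup (fun i : Fin n => min (G.degree i) (i : ℕ)) : ℕ) : ℕ∞) := by
  set k := 1 + Finset.univ.sup (fun i : Fin n => min (G.degree i) (i : ℕ)) with hk
  rw [SimpleGraph.chromaticNumber_le_iff_colorable]
  refine ⟨SimpleGraph.Coloring.mk (fun i => ⟨greedyCol G i, ?_⟩) ?_⟩
  · calc greedyCol G i ≤ min (G.degree i) (i : ℕ) := greedyCol_le G i
      _ ≤ Finset.univ.sup (fun i : Fin n => min (G.degree i) (i : ℕ)) :=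
        Finset.le_sup (f := fun i : Fin n => min (G.degree i) (i : ℕ)) (Finset.mem_univ i)
      _ < k := by omega
  · intro i j hadj h
    have h' : greedyCol G i = greedyCol G j := by
      simpa using congrArg Fin.val h
    rcases lt_trichotomy i j with hlt | heq | hgt
    · exact greedyCol_ne G hlt hadj.symm h'
    · exact G.ne_of_adj hadj heq
    · exact greedyCol_ne G hgt hadj h'.symm
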